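/- arXiv:1206.3931 — 2 statements merged into one kernel-verified Lean document; each statement's English description precedes it below -/
import Mathlib

section
/- Let k be a perfect field of characteristic p and S/R a degree-p totally ramified extension of complete DVRs over k, generated by α with β := α^p − α ∈ QF(R) and v_R(β) = −1. Then the degree of the different d_{S/R} = 2p − 2. -/
/-!
Statement 4 (paper Lemma `lemma.different`, degree-`p` case):
Let `k` be a perfect field of characteristic `p` and `S/R` a degree-`p` totally
ramified extension of complete DVRs over `k`, generated by `α` with
`β := α^p − α ∈ QF(R)` and `v_R β = −1`. Then the degree of the different is
`2p − 2`: `differentIdeal R S = m_S ^ (2p − 2)`.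
-/

set_option synthInstance.maxHeartbeats 1000000
set_option maxHeartbeats 1000000

open IsLocalRing

/-- `v_R β = −1` for `β ∈ K = QF(R)`: `β · π` is a unit of `R` for a uniformizer `π`. -/
def valIsNegOne (R K : Type*) [CommRing R] [Field K] [Algebra R K] (β : K) : Prop :=
  ∃ (π : R) (u : Rˣ), Irreducible π ∧ β * algebraMap R K π = algebraMap R K (u : R)

open Polynomial

theorem killing_wild_ramification_stmt4
    (p : ℕ) [Fact p.Prime]
    (k : Type*) [Field k] [PerfectField k] [CharP k p]
    (R K L S : Type*) [CommRing R] [IsDomain R] [IsDiscreteValuationRing R]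
    [IsAdicComplete (maximalIdeal R) R]
    [Field K] [Field L] [Algebra R K] [IsFractionRing R K]
    [Algebra K L] [FiniteDimensional K L]
    [CommRing S] [IsDomain S] [IsDiscreteValuationRing S]
    [IsAdicComplete (maximalIdeal S) S]
    [Algebra R S] [Module.Finite R S] [NoZeroSMulDivisors R S]
    [Algebra S L] [Algebra R L]
    [IsScalarTower R S L] [IsScalarTower R K L]
    [IsIntegralClosure S R L] [IsFractionRing S L]
    -- `R` and `S` are `k`-algebras (the extension is "over `k`")
    [Algebra k R] [Algebra k S] [IsScalarTower k R S]
    -- `S/R` is totally ramified: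
    (htot_e : Ideal.ramificationIdx' (maximalIdeal R) (maximalIdeal S) =
      Module.finrank K L)
    (htot_f : ∀ s : S, ∃ r : R, s - algebraMap R S r ∈ maximalIdeal S)
    -- the extension has degree `p` and is generated by an Artin–Schreier element
    -- of conductor `1`:
    (hdeg : Module.finrank K L = p)
    (α : L) (β : K)
    (hαβ : algebraMap K L β = α ^ p - α)
    (hβ : valIsNegOne R K β)
    (hgen : IntermediateField.adjoin K {α} = ⊤) :
    differentIdeal R S = maximalIdeal S ^ (2 * p - 2) := by
  classical
  have hp : p.Prime := Fact.out
  have hp2 : 2 ≤ p := hp.two_le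
  -- characteristic p
  haveI hCR : CharP R p := charP_of_injective_ringHom (algebraMap k R).injective p
  haveI hCS : CharP S p := charP_of_injective_ringHom (algebraMap k S).injective p
  -- injectivity of the various algebra maps
  have hKL : Function.Injective (algebraMap K L) := (algebraMap K L).injective
  have hRK : Function.Injective (algebraMap R K) := IsFractionRing.injective R K
  have hRL : Function.Injective (algebraMap R L) := by
    rw [IsScalarTower.algebraMap_eq R K L]; exact hKL.comp hRK
  have hRS : Function.Injective (algebraMap R S) := Module.isTorsionFree_iff_algebraMap_injective.mp inferInstance
  have hSL : Function.Injective (algebraMap S L) := IsFractionRing.injective S L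
  -- data from the valuation hypothesis
  obtain ⟨π, u, hπ, hβπ⟩ := hβ
  set a : R := (↑u⁻¹ : R) * π with ha_def
  have haπ : Associated π a := ⟨u⁻¹, mul_comm π (↑u⁻¹ : R)⟩
  have ha : Irreducible a := haπ.irreducible hπ
  have ha0 : a ≠ 0 := ha.ne_zero
  have hua : (u : R) * a = π := by
    rw [ha_def, ← mul_assoc, Units.mul_inv, one_mul]
  -- α ≠ 0
  have hβ0 : β ≠ 0 := by
    intro h
    rw [h, zero_mul] at hβπ
    exact u.ne_zero ((map_eq_zero_iff _ hRK).mp hβπ.symm)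
  have hα0 : α ≠ 0 := by
    intro h
    apply hβ0
    apply hKL
    rw [hαβ, h, map_zero, zero_pow hp.ne_zero, zero_sub, neg_zero]
  set y : L := α⁻¹ with hy_def
  have hy0 : y ≠ 0 := inv_ne_zero hα0
  have hαy : α * y = 1 := mul_inv_cancel₀ hα0
  -- images in L
  set uL : L := algebraMap R L (u : R) with huL_def
  set piL : L := algebraMap R L π with hpiL_def
  set aL : L := algebraMap R L a with haL_def
  have huaL : uL * aL = piL := by rw [huL_def, haL_def, hpiL_def, ← map_mul, hua]
  have huL0 : uL ≠ 0 := by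
    rw [huL_def, ne_eq, map_eq_zero_iff _ hRL]
    exact u.ne_zero
  have hβπL : algebraMap K L β * piL = uL := by
    have := congrArg (algebraMap K L) hβπ
    rwa [map_mul, ← IsScalarTower.algebraMap_apply R K L, ← IsScalarTower.algebraMap_apply R K L]
      at this
  -- the Artin–Schreier relation for y = α⁻¹
  have hrel : y ^ p + (aL * y ^ (p - 1) - aL) = 0 := by
    have h1 : α ^ p * y ^ p = 1 := by rw [← mul_pow, hαy, one_pow]
    have h2 : α ^ p * y ^ (p - 1) = α := by
      have hps : p = (p - 1) + 1 := (Nat.succ_pred_eq_of_pos (by omega)).symm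
      have hpow : α ^ p = α ^ (p - 1) * α := by rw [← pow_succ, ← hps]
      rw [hpow, mul_comm (α ^ (p - 1)) α, mul_assoc, ← mul_pow, hαy, one_pow, mul_one]
    have hne : uL * α ^ p ≠ 0 := mul_ne_zero huL0 (pow_ne_zero _ hα0)
    apply mul_left_cancel₀ hne
    have expand : uL * α ^ p * (y ^ p + (aL * y ^ (p - 1) - aL))
        = uL * (α ^ p * y ^ p) + (uL * aL) * (α ^ p * y ^ (p - 1)) - (uL * aL) * α ^ p := by
      ring
    rw [expand, h1, h2, huaL, mul_one]
    have : uL + piL * α - piL * α ^ p = uL - piL * (α ^ p - α) := by ring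
    rw [this, ← hαβ, mul_comm piL _, hβπL, sub_self, mul_zero]
  -- the Eisenstein polynomial g
  set g : R[X] := X ^ p + (C a * X ^ (p - 1) - C a) with hg_def
  have hdlt : (C a * X ^ (p - 1) - C a : R[X]).degree < ((p : ℕ) : WithBot ℕ) := by
    apply lt_of_le_of_lt (degree_sub_le _ _)
    apply max_lt
    · apply lt_of_le_of_lt (degree_C_mul_X_pow_le _ _)
      exact_mod_cast Nat.sub_lt (by omega) one_pos
    · exact lt_of_le_of_lt degree_C_le (by exact_mod_cast hp.pos)
  have hgmonic : g.Monic := monic_X_pow_add hdlt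
  have hgdeg : g.natDegree = p := by
    have h2 : g.degree = (p : ℕ) := by
      rw [hg_def, degree_add_eq_left_of_degree_lt (by rwa [degree_X_pow]), degree_X_pow]
    exact natDegree_eq_of_degree_eq_some h2
  -- y is a root of g over L
  have hgy : (aeval y) g = 0 := by
    rw [hg_def]
    simp only [map_add, map_sub, map_mul, aeval_X_pow, aeval_C]
    rw [← haL_def]
    exact hrel
  have hyint : IsIntegral R y := ⟨g, hgmonic, by rw [← aeval_def]; exact hgy⟩
  obtain ⟨ys, hys⟩ := (IsIntegralClosure.isIntegral_iff (A := S)).mp hyint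
  have hgys : (aeval ys) g = 0 := by
    apply hSL
    rw [map_zero, ← Polynomial.aeval_algebraMap_apply, hys, hgy]
  have hys0 : ys ≠ 0 := by
    intro h; apply hy0; rw [← hys, h, map_zero]
  have hysint : IsIntegral R ys := IsIntegralClosure.isIntegral R L ys
  -- ys is not a unit
  have hysnu : ¬ IsUnit ys := by
    intro hunit
    obtain ⟨v, hv⟩ := hunit
    have hαint : IsIntegral R α := by
      have hvinv : algebraMap S L (↑v⁻¹ : S) = α := by
        have h1 : algebraMap S L (↑v⁻¹ : S) * y = 1 := by
          rw [← hys, ← hv, ← map_mul, Units.inv_mul, map_one]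
        have h2 : algebraMap S L (↑v⁻¹ : S) = y⁻¹ := eq_inv_of_mul_eq_one_left h1
        rw [h2, hy_def, inv_inv]
      rw [← hvinv]
      exact (IsIntegralClosure.isIntegral R L (↑v⁻¹ : S)).map (IsScalarTower.toAlgHom R S L)
    have hβLint : IsIntegral R (algebraMap K L β) := by
      rw [hαβ]
      exact (hαint.pow p).sub hαint
    have hβint : IsIntegral R β :=
      (isIntegral_algHom_iff (IsScalarTower.toAlgHom R K L) hKL).mp hβLint
    obtain ⟨r, hr⟩ := IsIntegrallyClosed.isIntegral_iff.mp hβint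
    apply hπ.not_isUnit
    have : algebraMap R K (r * π) = algebraMap R K (u : R) := by
      rw [map_mul, hr, hβπ]
    exact isUnit_of_mul_isUnit_right ((hRK this) ▸ u.isUnit)
  have hysm : ys ∈ maximalIdeal S := (mem_maximalIdeal ys).mpr hysnu
  -- aS and the key relation in S
  set aS : S := algebraMap R S a with haS_def
  have haS0 : aS ≠ 0 := by
    rw [haS_def, ne_eq, map_eq_zero_iff _ hRS]; exact ha0
  have hrelS : ys ^ p = aS * (1 - ys ^ (p - 1)) := by
    have h0 : ys ^ p + (aS * ys ^ (p - 1) - aS) = 0 := by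
      have h := hgys
      rw [hg_def] at h
      simp only [map_add, map_sub, map_mul, aeval_X_pow, aeval_C] at h
      rwa [← haS_def] at h
    linear_combination h0
  have hwunit : IsUnit (1 - ys ^ (p - 1)) := by
    apply isUnit_one_sub_self_of_mem_nonunits
    exact (maximalIdeal S).pow_mem_of_mem hysm (p - 1) (by omega)
  have haysp : Associated aS (ys ^ p) := by
    obtain ⟨w, hw⟩ := hwunit
    exact ⟨w, by rw [hw, ← hrelS]⟩
  -- ys is irreducible
  obtain ⟨t, ht⟩ := IsDiscreteValuationRing.exists_irreducible S
  obtain ⟨n, hn⟩ := IsDiscreteValuationRing.associated_pow_irreducible hys0 ht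
  have hn1 : 1 ≤ n := by
    rcases Nat.eq_zero_or_pos n with h | h
    · exfalso; apply hysnu; rw [h, pow_zero] at hn; exact hn.symm.isUnit isUnit_one
    · exact h
  have haspow : Associated aS (t ^ (p * n)) := by
    have h1 : Associated (ys ^ p) ((t ^ n) ^ p) := hn.pow_pow
    have := haysp.trans h1
    rwa [← pow_mul, mul_comm n p] at this
  -- the image of the maximal ideal of R
  have hmR : maximalIdeal R = Ideal.span {π} :=
    (IsDiscreteValuationRing.irreducible_iff_uniformizer π).mp hπ
  have hπaS : Associated (algebraMap R S π) aS := by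
    obtain ⟨w, hw⟩ := haπ
    refine ⟨Units.map (algebraMap R S : R →+* S).toMonoidHom w, ?_⟩
    rw [haS_def, ← hw, map_mul]
    rfl
  have hmapmR : ∀ m : ℕ, Associated aS (t ^ m) →
      Ideal.map (algebraMap R S) (maximalIdeal R) = maximalIdeal S ^ m := by
    intro m hm
    rw [hmR, Ideal.map_span, Set.image_singleton,
      (IsDiscreteValuationRing.irreducible_iff_uniformizer t).mp ht, Ideal.span_singleton_pow]
    exact Ideal.span_singleton_eq_span_singleton.mpr (hπaS.trans hm)
  -- powers of the maximal ideal of S are distinct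
  have hpowlt : ∀ m : ℕ, ¬ maximalIdeal S ^ m ≤ maximalIdeal S ^ (m + 1) := by
    intro m hle
    rw [(IsDiscreteValuationRing.irreducible_iff_uniformizer t).mp ht,
      Ideal.span_singleton_pow, Ideal.span_singleton_pow,
      Ideal.span_singleton_le_span_singleton] at hle
    obtain ⟨c, hc⟩ := hle
    rw [pow_succ, mul_assoc] at hc
    have ht0 : t ^ m ≠ 0 := pow_ne_zero _ ht.ne_zero
    have h1 : t ^ m * 1 = t ^ m * (t * c) := by rw [mul_one]; exact hc
    have h2 : (1 : S) = t * c := mul_left_cancel₀ ht0 h1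
    exact ht.not_isUnit (IsUnit.of_mul_eq_one _ h2.symm)
  -- ramification index computation: p * n = p, so n = 1
  have hridx : Ideal.ramificationIdx' (maximalIdeal R) (maximalIdeal S) = p * n := by
    apply Ideal.ramificationIdx'_spec
    · rw [hmapmR (p * n) haspow]
    · rw [hmapmR (p * n) haspow]
      exact hpowlt (p * n)
  have hn_eq : n = 1 := by
    rw [htot_e, hdeg] at hridx
    have := hridx.symm
    nlinarith [hp.pos]
  have hysirr : Irreducible ys := by
    rw [hn_eq, pow_one] at hn
    exact hn.symm.irreducible ht
  have hmS : maximalIdeal S = Ideal.span {ys} :=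
    (IsDiscreteValuationRing.irreducible_iff_uniformizer ys).mp hysirr
  have hmap : Ideal.map (algebraMap R S) (maximalIdeal R) = maximalIdeal S ^ p := by
    rw [hmR, Ideal.map_span, Set.image_singleton, hmS, Ideal.span_singleton_pow]
    exact Ideal.span_singleton_eq_span_singleton.mpr (hπaS.trans haysp)
  -- `S = R[ys]`
  have hadj : Algebra.adjoin R {ys} = ⊤ := by
    set N := Subalgebra.toSubmodule (Algebra.adjoin R {ys}) with hN
    have hysA : ys ∈ Algebra.adjoin R {ys} := Algebra.subset_adjoin rfl
    have hstep : ∀ j : ℕ, ∀ s : S, ∃ m ∈ N, s - m ∈ maximalIdeal S ^ j := by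
      intro j
      induction j with
      | zero =>
        intro s
        exact ⟨0, zero_mem _, by simp [Ideal.one_eq_top]⟩
      | succ j ih =>
        intro s
        obtain ⟨m, hm, hd⟩ := ih s
        rw [hmS, Ideal.span_singleton_pow, Ideal.mem_span_singleton] at hd
        obtain ⟨c, hc⟩ := hd
        obtain ⟨r, hr⟩ := htot_f c
        rw [hmS, Ideal.mem_span_singleton] at hr
        obtain ⟨e, he⟩ := hr
        refine ⟨m + algebraMap R S r * ys ^ j, ?_, ?_⟩
        · exact Submodule.add_mem _ hm ((Subalgebra.mem_toSubmodule _).mpr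
            (mul_mem (Subalgebra.algebraMap_mem _ r) (pow_mem hysA j)))
        · rw [hmS, Ideal.span_singleton_pow, Ideal.mem_span_singleton]
          exact ⟨e, by linear_combination hc + ys ^ j * he⟩
    have hsup : (⊤ : Submodule R S) ≤ N ⊔ (maximalIdeal R • (⊤ : Submodule R S)) := by
      intro s _
      obtain ⟨m, hm, hd⟩ := hstep p s
      have hd' : s - m ∈ maximalIdeal R • (⊤ : Submodule R S) := by
        rw [Ideal.smul_top_eq_map]
        show s - m ∈ Ideal.map (algebraMap R S) (maximalIdeal R)
        rw [hmap]
        exact hd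
      have hs : s = m + (s - m) := by ring
      rw [hs]
      exact Submodule.add_mem_sup hm hd'
    have hjac : maximalIdeal R ≤ (⊥ : Ideal R).jacobson :=
      le_of_eq (IsLocalRing.jacobson_eq_maximalIdeal ⊥ bot_ne_top).symm
    have hNak := Submodule.sup_eq_sup_smul_of_le_smul_of_le_jacobson
      (I := maximalIdeal R) (J := ⊥) (N := N) (N' := (⊤ : Submodule R S))
      (Module.finite_def.mp inferInstance) hjac hsup
    rw [sup_top_eq, Submodule.bot_smul, sup_bot_eq] at hNak
    rw [← Algebra.toSubmodule_eq_top, ← hN]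
    exact hNak.symm
  -- minimal polynomial of ys is g
  have hyintK : IsIntegral K y := .of_finite K y
  have hKy : IntermediateField.adjoin K {y} = ⊤ := by
    have hymem : y ∈ IntermediateField.adjoin K {y} :=
      IntermediateField.mem_adjoin_simple_self K y
    have hαmem : α ∈ IntermediateField.adjoin K {y} := by
      have := (IntermediateField.adjoin K {y}).inv_mem hymem
      rwa [hy_def, inv_inv] at this
    rw [← top_le_iff, ← hgen, IntermediateField.adjoin_le_iff]
    exact Set.singleton_subset_iff.mpr hαmem
  have hydeg : (minpoly K y).natDegree = p := by
    have h1 := IntermediateField.adjoin.finrank hyintK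
    rw [hKy] at h1
    rw [← h1, IntermediateField.finrank_top', hdeg]
  have hming : minpoly R ys = g := by
    have hdvd : minpoly R ys ∣ g := minpoly.isIntegrallyClosed_dvd hysint hgys
    have hmapmin : minpoly K y = (minpoly R ys).map (algebraMap R K) := by
      rw [← hys]
      exact minpoly.isIntegrallyClosed_eq_field_fractions K L hysint
    have hdegeq : (minpoly R ys).natDegree = p := by
      rw [← hydeg, hmapmin, (minpoly.monic hysint).natDegree_map]
    exact (eq_of_monic_of_dvd_of_natDegree_le (minpoly.monic hysint) hgmonic hdvd
      (by rw [hgdeg, hdegeq])).symm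
  -- separability of L/K
  haveI hCK : CharP K p := charP_of_injective_ringHom hRK p
  have hαintK : IsIntegral K α := .of_finite K α
  have hsepα : IsSeparable K α := by
    set f : K[X] := X ^ p + (-X - C β) with hf_def
    have hflt : (-X - C β : K[X]).degree < ((p : ℕ) : WithBot ℕ) := by
      apply lt_of_le_of_lt (degree_sub_le _ _)
      apply max_lt
      · rw [degree_neg]
        exact lt_of_le_of_lt degree_X_le (by exact_mod_cast hp.one_lt)
      · exact lt_of_le_of_lt degree_C_le (by exact_mod_cast hp.pos)
    have hfmonic : f.Monic := monic_X_pow_add hflt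
    have hfα : aeval α f = 0 := by
      simp only [hf_def, map_add, map_sub, map_neg, aeval_X_pow, aeval_X, aeval_C]
      linear_combination -hαβ
    have hfdvd : minpoly K α ∣ f := minpoly.dvd K α hfα
    have hfdeg : f.natDegree = p := by
      have h2 : f.degree = (p : ℕ) := by
        rw [hf_def, degree_add_eq_left_of_degree_lt (by rwa [degree_X_pow]), degree_X_pow]
      exact natDegree_eq_of_degree_eq_some h2
    have hαdeg : (minpoly K α).natDegree = p := by
      have h1 := IntermediateField.adjoin.finrank hαintK
      rw [hgen] at h1
      rw [← h1, IntermediateField.finrank_top', hdeg]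
    have hminf : minpoly K α = f :=
      (eq_of_monic_of_dvd_of_natDegree_le (minpoly.monic hαintK) hfmonic hfdvd
        (by rw [hfdeg, hαdeg])).symm
    have hdf : derivative f = -1 := by
      rw [hf_def, derivative_add, derivative_sub, derivative_neg, derivative_X, derivative_C,
        derivative_X_pow, CharP.cast_eq_zero K p, map_zero, zero_mul, zero_add, sub_zero]
    rw [IsSeparable, separable_iff_derivative_ne_zero (minpoly.irreducible hαintK), hminf, hdf]
    simp
  haveI hsepKL : Algebra.IsSeparable K L := by
    haveI : Algebra.IsSeparable K (IntermediateField.adjoin K {α}) :=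
      (IntermediateField.isSeparable_adjoin_simple_iff_isSeparable K L).mpr hsepα
    exact Algebra.IsSeparable.of_algHom K _
      (((IntermediateField.equivOfEq hgen).trans IntermediateField.topEquiv).symm.toAlgHom)
  -- conductor and the different
  have hADJ : Algebra.adjoin K {algebraMap S L ys} = ⊤ := by
    rw [hys, ← IntermediateField.adjoin_simple_toSubalgebra_of_isAlgebraic hyintK.isAlgebraic, hKy,
      IntermediateField.top_toSubalgebra]
  have hcond : conductor R ys = ⊤ := conductor_eq_top_of_adjoin_eq_top hadj
  have hmain := conductor_mul_differentIdeal R K L ys hADJ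
  rw [hcond, Ideal.top_mul, hming] at hmain
  -- the derivative of g
  have hcastR : (((p - 1 : ℕ)) : R) = -1 := by
    rw [Nat.cast_sub (by omega), CharP.cast_eq_zero R p, Nat.cast_one, zero_sub]
  have hderg : derivative g = C (a * ((p - 1 : ℕ) : R)) * X ^ (p - 2) := by
    have hpp : p - 1 - 1 = p - 2 := by omega
    rw [hg_def, derivative_add, derivative_sub, derivative_C, derivative_C_mul,
      derivative_X_pow, derivative_X_pow, CharP.cast_eq_zero R p, map_zero, zero_mul, zero_add,
      sub_zero, hpp, ← mul_assoc, ← C_mul]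
  have hcastS : (((p - 1 : ℕ)) : S) = -1 := by
    rw [Nat.cast_sub (by omega), CharP.cast_eq_zero S p, Nat.cast_one, zero_sub]
  have haeval : aeval ys (derivative g) = aS * (-1 : S) * ys ^ (p - 2) := by
    rw [hderg, map_mul, aeval_C, aeval_X_pow, map_mul, map_natCast, hcastS, ← haS_def]
  have hassoc : Associated (aeval ys (derivative g)) (ys ^ (2 * p - 2)) := by
    rw [haeval]
    have hth : aS * (-1 : S) * ys ^ (p - 2) = -(aS * ys ^ (p - 2)) := by ring
    rw [hth]
    have h1 : Associated (-(aS * ys ^ (p - 2))) (aS * ys ^ (p - 2)) := by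
      exact ⟨-1, by simp⟩
    have h2 : Associated (aS * ys ^ (p - 2)) (ys ^ p * ys ^ (p - 2)) := haysp.mul_right _
    have h3 : ys ^ p * ys ^ (p - 2) = ys ^ (2 * p - 2) := by
      rw [← pow_add]
      congr 1
      omega
    rw [← h3]
    exact h1.trans h2
  rw [hmain, hmS, Ideal.span_singleton_pow]
  exact Ideal.span_singleton_eq_span_singleton.mpr hassoc
end

section
/- With notation as before (R a DVR with fraction field K, L, M finite separable extensions of K, Ω = LM, A a DVR of Ω dominating R with S = A ∩ L, T = A ∩ M, and A/m_A = S/m_S): if QF(Ŝ) ⊆ QF(T̂), then the extension A/T is unramified. -/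
/-!
Statement 11 (paper, Corollary to Lemma `completelocal`):
With the notation of the lemma (`R` a DVR with fraction field `K`; `L`, `M`
finite separable extensions of `K`, `Ω = LM`; `A` a DVR of `Ω` dominating `R`,
`S = A ∩ L`, `T = A ∩ M`, `A/m_A = S/m_S`): if `QF(Ŝ) ⊆ QF(T̂)` then `A/T` is
unramified (the maximal ideal of `T` generates that of `A`, and the residue
extension is trivial).
-/

set_option synthInstance.maxHeartbeats 1000000
set_option maxHeartbeats 1000000

open IsLocalRing

/-- `Rhat` (with a given `R`-algebra structure) is the maximal-adic completion of
the local ring `R`: it is adically complete, `R` is dense in it, and the map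
`R → Rhat` exactly matches the maximal-adic filtrations. -/
def IsCompletionHom (R Rhat : Type*) [CommRing R] [IsLocalRing R]
    [CommRing Rhat] [IsLocalRing Rhat] [Algebra R Rhat] : Prop :=
  IsAdicComplete (maximalIdeal Rhat) Rhat ∧
  (∀ (y : Rhat) (n : ℕ), ∃ x : R, y - algebraMap R Rhat x ∈ maximalIdeal Rhat ^ n) ∧
  (∀ (x : R) (n : ℕ), algebraMap R Rhat x ∈ maximalIdeal Rhat ^ n ↔ x ∈ maximalIdeal R ^ n)

theorem completion_pow_factor {T C : Type*} [CommRing T] [IsDomain T] [IsDiscreteValuationRing T]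
    [CommRing C] [IsLocalRing C] [Algebra T C] (h : IsCompletionHom T C)
    {π : T} (hπ : Irreducible π) (k : ℕ) (y : C) (hy : y ∈ maximalIdeal C ^ k) :
    ∃ c : C, y = algebraMap T C π ^ k * c := by
  obtain ⟨hcomp, hdense, hmem⟩ := h
  have hπm : maximalIdeal T = Ideal.span {π} :=
    (IsDiscreteValuationRing.irreducible_iff_uniformizer π).mp hπ
  have hπC : algebraMap T C π ∈ maximalIdeal C := by
    have : π ∈ maximalIdeal T ^ 1 := by
      rw [pow_one]; exact (IsLocalRing.mem_maximalIdeal π).mpr hπ.not_isUnit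
    simpa using (hmem π 1).mpr this
  have step : ∀ i (z : C), z ∈ maximalIdeal C ^ (k + i) →
      ∃ (w : T) (z' : C), z' ∈ maximalIdeal C ^ (k + i + 1) ∧
        z = algebraMap T C π ^ (k + i) * algebraMap T C w + z' := by
    intro i z hz
    obtain ⟨t, ht⟩ := hdense z (k + i + 1)
    have htmem : algebraMap T C t ∈ maximalIdeal C ^ (k + i) := by
      have he : algebraMap T C t = z - (z - algebraMap T C t) := by ring
      rw [he]
      exact sub_mem hz (Ideal.pow_le_pow_right (by omega) ht)
    have ht2 : t ∈ maximalIdeal T ^ (k + i) := (hmem t (k + i)).mp htmem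
    rw [hπm, Ideal.span_singleton_pow, Ideal.mem_span_singleton'] at ht2
    obtain ⟨w, hw⟩ := ht2
    refine ⟨w, z - algebraMap T C t, ht, ?_⟩
    have hww : algebraMap T C π ^ (k + i) * algebraMap T C w = algebraMap T C t := by
      rw [← map_pow, ← map_mul, mul_comm, hw]
    rw [hww]; ring
  choose W Z hZmem hZeq using step
  let seq : ∀ i : ℕ, {z : C // z ∈ maximalIdeal C ^ (k + i)} := fun i =>
    Nat.rec ⟨y, hy⟩ (fun i p => ⟨Z i p.1 p.2, hZmem i p.1 p.2⟩) i
  let w : ℕ → T := fun i => W i (seq i).1 (seq i).2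
  have hseq : ∀ i, (seq i).1 =
      algebraMap T C π ^ (k + i) * algebraMap T C (w i) + (seq (i + 1)).1 := by
    intro i
    exact hZeq i (seq i).1 (seq i).2
  let c : ℕ → C := fun n => ∑ i ∈ Finset.range n, algebraMap T C π ^ i * algebraMap T C (w i)
  have hsum : ∀ n, y = algebraMap T C π ^ k * c n + (seq n).1 := by
    intro n
    induction n with
    | zero => simp [c, seq]
    | succ n ih =>
      rw [ih, hseq n]
      simp only [c, Finset.sum_range_succ]
      ring
  have hcauchy : ∀ {m n : ℕ}, m ≤ n →
      c m ≡ c n [SMOD ((maximalIdeal C ^ m • ⊤ : Submodule C C))] := by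
    intro m n hmn
    rw [SModEq.sub_mem]
    have : c n - c m = ∑ i ∈ Finset.Ico m n, algebraMap T C π ^ i * algebraMap T C (w i) := by
      simp [c, Finset.sum_Ico_eq_sub _ hmn]
    have hmem2 : c n - c m ∈ maximalIdeal C ^ m := by
      rw [this]
      refine Ideal.sum_mem _ fun i hi => ?_
      have h1 : algebraMap T C π ^ i ∈ maximalIdeal C ^ i := Ideal.pow_mem_pow hπC i
      have h2 : algebraMap T C π ^ i ∈ maximalIdeal C ^ m :=
        Ideal.pow_le_pow_right (Finset.mem_Ico.mp hi).1 h1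
      exact Ideal.mul_mem_right _ _ h2
    have hconv : (maximalIdeal C ^ m : Ideal C) = (maximalIdeal C ^ m • ⊤ : Submodule C C) := by
      simp
    rw [← hconv, ← neg_sub]
    exact neg_mem hmem2
  obtain ⟨Lc, hLc⟩ := hcomp.toIsPrecomplete.prec hcauchy
  refine ⟨Lc, ?_⟩
  have hfin : ∀ n, y - algebraMap T C π ^ k * Lc ∈ maximalIdeal C ^ n := by
    intro n
    have h1 : y - algebraMap T C π ^ k * Lc =
        algebraMap T C π ^ k * (c n - Lc) + (seq n).1 := by
      rw [hsum n]; ring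
    have h2 : c n - Lc ∈ maximalIdeal C ^ n := by
      have := (hLc n)
      rw [SModEq.sub_mem] at this
      simpa using this
    have h3 : algebraMap T C π ^ k * (c n - Lc) ∈ maximalIdeal C ^ (k + n) := by
      have := Ideal.mul_mem_mul (Ideal.pow_mem_pow hπC k) h2
      rwa [← pow_add] at this
    have h4 : (seq n).1 ∈ maximalIdeal C ^ (k + n) := (seq n).2
    have h5 : y - algebraMap T C π ^ k * Lc ∈ maximalIdeal C ^ (k + n) := by
      rw [h1]; exact add_mem h3 h4
    exact Ideal.pow_le_pow_right (by omega) h5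
  have h0 : y - algebraMap T C π ^ k * Lc = 0 := by
    refine hcomp.toIsHausdorff.haus _ fun n => ?_
    rw [SModEq.sub_mem, sub_zero]
    simpa using hfin n
  linear_combination h0

theorem completion_factor_unit {T C : Type*} [CommRing T] [IsDomain T] [IsDiscreteValuationRing T]
    [CommRing C] [IsLocalRing C] [Algebra T C] (h : IsCompletionHom T C)
    {π : T} (hπ : Irreducible π) (y : C) (hy : y ≠ 0) :
    ∃ (m : ℕ) (c : C), IsUnit c ∧ y = algebraMap T C π ^ m * c := by
  have hπC : algebraMap T C π ∈ maximalIdeal C := by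
    have h1 : π ∈ maximalIdeal T ^ 1 := by
      rw [pow_one]; exact (IsLocalRing.mem_maximalIdeal π).mpr hπ.not_isUnit
    simpa using (h.2.2 π 1).mpr h1
  have hex : ∃ n, y ∉ maximalIdeal C ^ n := by
    by_contra hc
    push_neg at hc
    exact hy (h.1.toIsHausdorff.haus _ fun n => by
      rw [SModEq.sub_mem, sub_zero]; simpa using hc n)
  classical
  let n₀ := Nat.find hex
  have hspec : y ∉ maximalIdeal C ^ n₀ := Nat.find_spec hex
  have hn0 : n₀ ≠ 0 := by
    intro h0
    apply hspec
    rw [h0]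
    simp
  obtain ⟨m, hm⟩ : ∃ m, n₀ = m + 1 := ⟨n₀ - 1, by omega⟩
  have hym : y ∈ maximalIdeal C ^ m := by
    by_contra hc
    exact absurd hc (by simpa using Nat.find_min hex (m := m) (by omega))
  obtain ⟨c, hc⟩ := completion_pow_factor h hπ m y hym
  refine ⟨m, c, ?_, hc⟩
  by_contra hcu
  apply hspec
  rw [hm, hc, pow_succ]
  exact Ideal.mul_mem_mul (Ideal.pow_mem_pow hπC m)
    ((IsLocalRing.mem_maximalIdeal c).mpr hcu)

theorem pow_unit_eq_aux {C : Type*} [CommRing C] [IsLocalRing C] [IsDomain C]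
    {p : C} (hp0 : p ≠ 0) (hp : p ∈ maximalIdeal C) {U V : C} (hU : IsUnit U)
    {i j : ℕ} (hij : i ≤ j) (hin : p ^ i * U = p ^ j * V) : i = j := by
  by_contra hne
  have hlt : i < j := lt_of_le_of_ne hij hne
  have h1 : p ^ i * U = p ^ i * (p ^ (j - i) * V) := by
    have hpj : p ^ j = p ^ i * p ^ (j - i) := by
      rw [← pow_add]
      congr 1
      omega
    rw [hin, hpj, mul_assoc]
  have h2 : U = p ^ (j - i) * V := mul_left_cancel₀ (pow_ne_zero i hp0) h1
  have h3 : U ∈ maximalIdeal C := by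
    rw [h2]
    obtain ⟨s, hs⟩ : ∃ s, j - i = s + 1 := ⟨j - i - 1, by omega⟩
    rw [hs, pow_succ]
    exact Ideal.mul_mem_right _ _ (Ideal.mul_mem_left _ _ hp)
  exact ((IsLocalRing.mem_maximalIdeal U).mp h3) hU

theorem pow_unit_eq {C : Type*} [CommRing C] [IsLocalRing C] [IsDomain C]
    {p : C} (hp0 : p ≠ 0) (hp : p ∈ maximalIdeal C) {U V : C} (hU : IsUnit U) (hV : IsUnit V)
    {i j : ℕ} (hin : p ^ i * U = p ^ j * V) : i = j := by
  rcases le_total i j with hij | hij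
  · exact pow_unit_eq_aux hp0 hp hU hij hin
  · exact (pow_unit_eq_aux hp0 hp hV hij hin.symm).symm

theorem killing_wild_ramification_stmt11
    -- `R` a DVR with quotient field `K`
    (R K : Type*) [CommRing R] [IsDomain R] [IsDiscreteValuationRing R]
    [Field K] [Algebra R K] [IsFractionRing R K]
    -- `Ω = LM` with `L`, `M` finite separable extensions of `K`
    (Ω : Type*) [Field Ω] [Algebra K Ω] [FiniteDimensional K Ω]
    [Algebra.IsSeparable K Ω]
    (L M : IntermediateField K Ω) (hLM : L ⊔ M = ⊤)
    -- `A` a DVR of `Ω` dominating `R`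
    (A : Type*) [CommRing A] [IsDomain A] [IsDiscreteValuationRing A]
    [Algebra A Ω] [IsFractionRing A Ω]
    [Algebra R A] [Algebra R Ω] [Algebra R K] [IsScalarTower R A Ω] [IsScalarTower R K Ω]
    (hdom : ∀ r : R, algebraMap R A r ∈ maximalIdeal A ↔ r ∈ maximalIdeal R)
    -- `S = A ∩ L`
    (S : Type*) [CommRing S] [IsDomain S] [IsDiscreteValuationRing S]
    [Algebra S A] [Algebra S Ω] [IsScalarTower S A Ω]
    (hS : Function.Injective (algebraMap S A))
    (hSL : ∀ a : A, algebraMap A Ω a ∈ L ↔ ∃ s : S, algebraMap S A s = a)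
    -- `T = A ∩ M`
    (T : Type*) [CommRing T] [IsDomain T] [IsDiscreteValuationRing T]
    [Algebra T A] [Algebra T Ω] [IsScalarTower T A Ω]
    (hT : Function.Injective (algebraMap T A))
    (hTM : ∀ a : A, algebraMap A Ω a ∈ M ↔ ∃ t : T, algebraMap T A t = a)
    -- the completions `Ŝ`, `T̂`, `Â`
    (Shat : Type*) [CommRing Shat] [IsLocalRing Shat] [Algebra S Shat]
    (hShat : IsCompletionHom S Shat)
    (That : Type*) [CommRing That] [IsLocalRing That] [Algebra T That]
    (hThat : IsCompletionHom T That)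
    (Ahat : Type*) [CommRing Ahat] [IsLocalRing Ahat] [IsDomain Ahat] [Algebra A Ahat]
    (hAhat : IsCompletionHom A Ahat)
    -- the induced maps `Ŝ → Â` and `T̂ → Â` of completions
    [Algebra Shat Ahat] [Algebra That Ahat]
    (hSA : ∀ s : S, algebraMap Shat Ahat (algebraMap S Shat s) =
      algebraMap A Ahat (algebraMap S A s))
    (hTA : ∀ t : T, algebraMap That Ahat (algebraMap T That t) =
      algebraMap A Ahat (algebraMap T A t))
    -- the residue field of `A` equals that of `S`
    (hres : ∀ a : A, ∃ s : S, a - algebraMap S A s ∈ maximalIdeal A)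
    -- `QF(Ŝ) ⊆ QF(T̂)` inside `QF(Â)`
    (hsub : Set.range (fun s : Shat => algebraMap Ahat (FractionRing Ahat)
        (algebraMap Shat Ahat s)) ⊆
      (Subfield.closure (Set.range (fun t : That => algebraMap Ahat (FractionRing Ahat)
        (algebraMap That Ahat t))) : Set (FractionRing Ahat))) :
    -- `A/T` is unramified
    Ideal.map (algebraMap T A) (maximalIdeal T) = maximalIdeal A ∧
      ∀ a : A, ∃ t : T, a - algebraMap T A t ∈ maximalIdeal A := by
  classical
  obtain ⟨πT, hπT⟩ := IsDiscreteValuationRing.exists_irreducible T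
  obtain ⟨πA, hπA⟩ := IsDiscreteValuationRing.exists_irreducible A
  -- `A → Ahat` is injective
  have hAinj : Function.Injective (algebraMap A Ahat) := by
    intro a b hab
    have hzero : ∀ n, a - b ∈ maximalIdeal A ^ n := fun n => (hAhat.2.2 _ n).mp (by
      rw [map_sub, hab, sub_self]; exact Submodule.zero_mem _)
    have hb := Ideal.iInf_pow_eq_bot_of_isLocalRing (R := A) (maximalIdeal A)
      (IsLocalRing.maximalIdeal.isMaximal A).ne_top
    have hm : a - b ∈ (⨅ n : ℕ, maximalIdeal A ^ n) := Ideal.mem_iInf.mpr hzero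
    rw [hb, Ideal.mem_bot, sub_eq_zero] at hm
    exact hm
  -- `T → A` is a local homomorphism
  have hTunit : ∀ t : T, IsUnit (algebraMap T A t) → IsUnit t := by
    intro t hu
    obtain ⟨b, hb⟩ := isUnit_iff_exists_inv.mp hu
    have hbM : algebraMap A Ω b ∈ M := by
      have haM : algebraMap A Ω (algebraMap T A t) ∈ M := (hTM _).mpr ⟨t, rfl⟩
      have hmul : algebraMap A Ω (algebraMap T A t) * algebraMap A Ω b = 1 := by
        rw [← map_mul, hb, map_one]
      have hinv : algebraMap A Ω b = (algebraMap A Ω (algebraMap T A t))⁻¹ :=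
        eq_inv_of_mul_eq_one_right hmul
      rw [hinv]
      exact M.inv_mem haM
    obtain ⟨t', ht'⟩ := (hTM b).mp hbM
    refine IsUnit.of_mul_eq_one (a := t) t' ?_
    apply hT
    rw [map_mul, map_one, ht', hb]
  have hTm : ∀ t : T, t ∈ maximalIdeal T → algebraMap T A t ∈ maximalIdeal A := by
    intro t ht
    by_contra hc
    exact ((IsLocalRing.mem_maximalIdeal t).mp ht) (hTunit t (by
      by_contra hcu
      exact hc ((IsLocalRing.mem_maximalIdeal _).mpr hcu)))
  -- the element `q = π_T` viewed in `A`
  set q : A := algebraMap T A πT with hqdef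
  have hq0 : q ≠ 0 := fun h0 => hπT.ne_zero (hT (by rw [← hqdef, h0, map_zero]))
  have hqm : q ∈ maximalIdeal A :=
    hTm πT ((IsLocalRing.mem_maximalIdeal πT).mpr hπT.not_isUnit)
  have hqAhat : algebraMap A Ahat q ∈ maximalIdeal Ahat := by
    have h1 : q ∈ maximalIdeal A ^ 1 := by rwa [pow_one]
    simpa using (hAhat.2.2 q 1).mpr h1
  -- `π_A` in `Ahat`
  have hp0 : algebraMap A Ahat πA ≠ 0 := fun h0 => hπA.ne_zero (hAinj (by rw [h0, map_zero]))
  have hpm : algebraMap A Ahat πA ∈ maximalIdeal Ahat := by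
    have h1 : πA ∈ maximalIdeal A ^ 1 := by
      rw [pow_one]; exact (IsLocalRing.mem_maximalIdeal πA).mpr hπA.not_isUnit
    simpa using (hAhat.2.2 πA 1).mpr h1
  -- the subfield `F = QF(T̂)` of `FractionRing Ahat`
  set F : Subfield (FractionRing Ahat) :=
    Subfield.closure (Set.range (fun t : That => algebraMap Ahat (FractionRing Ahat)
      (algebraMap That Ahat t))) with hFdef
  -- every element of `A` lands in `F`
  have injF : Function.Injective (algebraMap Ahat (FractionRing Ahat)) :=
    IsFractionRing.injective Ahat (FractionRing Ahat)
  have g₀inj : Function.Injective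
      ((algebraMap Ahat (FractionRing Ahat)).comp (algebraMap A Ahat)) := by
    exact injF.comp hAinj
  have hall : ∀ a : A,
      algebraMap Ahat (FractionRing Ahat) (algebraMap A Ahat a) ∈ F := by
    set g : Ω →+* FractionRing Ahat := IsFractionRing.lift g₀inj with hgdef
    have hMF : ∀ ω : Ω, ω ∈ M → g ω ∈ F := by
      have base : ∀ b : A, algebraMap A Ω b ∈ M → g (algebraMap A Ω b) ∈ F := by
        intro b hbM
        obtain ⟨t, ht⟩ := (hTM b).mp hbM
        rw [hgdef, IsFractionRing.lift_algebraMap]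
        show algebraMap Ahat (FractionRing Ahat) (algebraMap A Ahat b) ∈ F
        rw [← ht, ← hTA t]
        exact Subfield.subset_closure ⟨algebraMap T That t, rfl⟩
      intro ω hω
      rcases ValuationRing.isInteger_or_isInteger A ω with ⟨a, ha⟩ | ⟨a, ha⟩
      · rw [← ha]
        exact base a (by rwa [ha])
      · by_cases hω0 : ω = 0
        · rw [hω0, map_zero]; exact zero_mem F
        · have h1 : g ω⁻¹ ∈ F := by
            rw [← ha]
            exact base a (by rw [ha]; exact M.inv_mem hω)
          have h2 : g ω⁻¹ * g ω = 1 := by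
            rw [← map_mul, inv_mul_cancel₀ hω0, map_one]
          rw [← inv_eq_of_mul_eq_one_right h2]
          exact F.inv_mem h1
    have hLF : ∀ ω : Ω, ω ∈ L → g ω ∈ F := by
      have base : ∀ b : A, algebraMap A Ω b ∈ L → g (algebraMap A Ω b) ∈ F := by
        intro b hbL
        obtain ⟨s, hs⟩ := (hSL b).mp hbL
        rw [hgdef, IsFractionRing.lift_algebraMap]
        show algebraMap Ahat (FractionRing Ahat) (algebraMap A Ahat b) ∈ F
        rw [← hs, ← hSA s]
        exact hsub ⟨algebraMap S Shat s, rfl⟩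
      intro ω hω
      rcases ValuationRing.isInteger_or_isInteger A ω with ⟨a, ha⟩ | ⟨a, ha⟩
      · rw [← ha]
        exact base a (by rwa [ha])
      · by_cases hω0 : ω = 0
        · rw [hω0, map_zero]; exact zero_mem F
        · have h1 : g ω⁻¹ ∈ F := by
            rw [← ha]
            exact base a (by rw [ha]; exact L.inv_mem hω)
          have h2 : g ω⁻¹ * g ω = 1 := by
            rw [← map_mul, inv_mul_cancel₀ hω0, map_one]
          rw [← inv_eq_of_mul_eq_one_right h2]
          exact F.inv_mem h1
    have halg : ∀ x : K, algebraMap K Ω x ∈ F.comap g := by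
      intro x
      rw [Subfield.mem_comap]
      exact hMF _ (M.algebraMap_mem x)
    have hallω : ∀ ω : Ω, g ω ∈ F := by
      intro ω
      have h1 : ω ∈ L ⊔ M := by rw [hLM]; trivial
      have hLE : L ≤ (F.comap g).toIntermediateField halg := by
        intro x hx
        show x ∈ F.comap g
        rw [Subfield.mem_comap]
        exact hLF x hx
      have hME : M ≤ (F.comap g).toIntermediateField halg := by
        intro x hx
        show x ∈ F.comap g
        rw [Subfield.mem_comap]
        exact hMF x hx
      have h2 := (sup_le hLE hME) h1
      have h3 : ω ∈ F.comap g := h2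
      rwa [Subfield.mem_comap] at h3
    intro a
    have := hallω (algebraMap A Ω a)
    rwa [hgdef, IsFractionRing.lift_algebraMap] at this
  -- elements of the subring closure are in the range of `That → FractionRing Ahat`
  have hrange : ∀ x ∈ Subring.closure (Set.range (fun t : That =>
      algebraMap Ahat (FractionRing Ahat) (algebraMap That Ahat t))),
      ∃ u : That, algebraMap Ahat (FractionRing Ahat) (algebraMap That Ahat u) = x := by
    intro x hx
    have hle : Subring.closure (Set.range (fun t : That =>
        algebraMap Ahat (FractionRing Ahat) (algebraMap That Ahat t))) ≤
        ((algebraMap Ahat (FractionRing Ahat)).comp (algebraMap That Ahat)).range :=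
      Subring.closure_le.mpr (by rintro _ ⟨t, rfl⟩; exact ⟨t, rfl⟩)
    exact hle hx
  -- the key factorization lemma
  have key : ∀ a : A, a ≠ 0 → ∃ (l m : ℕ) (X Y : Ahat) (tx ty : T),
      IsUnit X ∧ IsUnit Y ∧
      algebraMap A Ahat (algebraMap T A tx) - X ∈ maximalIdeal Ahat ∧
      algebraMap A Ahat (algebraMap T A ty) - Y ∈ maximalIdeal Ahat ∧
      algebraMap A Ahat a * (algebraMap A Ahat q ^ m * Y) =
        algebraMap A Ahat q ^ l * X := by
    intro a ha
    have hga : algebraMap Ahat (FractionRing Ahat) (algebraMap A Ahat a) ∈ F := hall a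
    rw [hFdef, Subfield.mem_closure_iff] at hga
    obtain ⟨x, hx, ycl, hycl, hdiv⟩ := hga
    obtain ⟨xh, rfl⟩ := hrange x hx
    obtain ⟨yh, rfl⟩ := hrange ycl hycl
    have hgne : algebraMap Ahat (FractionRing Ahat) (algebraMap A Ahat a) ≠ 0 := by
      intro h0
      exact ha (g₀inj (by rw [RingHom.comp_apply, h0, map_zero]))
    have hyne : algebraMap Ahat (FractionRing Ahat) (algebraMap That Ahat yh) ≠ 0 := by
      intro h0
      rw [h0, div_zero] at hdiv
      exact hgne hdiv.symm
    have hyh0 : yh ≠ 0 := fun h0 => hyne (by rw [h0, map_zero, map_zero])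
    have hxne : algebraMap Ahat (FractionRing Ahat) (algebraMap That Ahat xh) ≠ 0 := by
      intro h0
      rw [h0, zero_div] at hdiv
      exact hgne hdiv.symm
    have hxh0 : xh ≠ 0 := fun h0 => hxne (by rw [h0, map_zero, map_zero])
    obtain ⟨l, x₀, hx₀u, hx₀⟩ := completion_factor_unit hThat hπT xh hxh0
    obtain ⟨m, y₀, hy₀u, hy₀⟩ := completion_factor_unit hThat hπT yh hyh0
    have hφq : algebraMap That Ahat (algebraMap T That πT) = algebraMap A Ahat q := hTA πT
    -- approximations of the unit parts by elements of `T`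
    have approx : ∀ z : That, ∃ t : T,
        algebraMap A Ahat (algebraMap T A t) - algebraMap That Ahat z ∈ maximalIdeal Ahat := by
      intro z
      obtain ⟨t, ht⟩ := hThat.2.1 z 1
      obtain ⟨c, hc⟩ := completion_pow_factor hThat hπT 1 (z - algebraMap T That t)
        (by simpa using ht)
      refine ⟨t, ?_⟩
      have h1 : algebraMap A Ahat (algebraMap T A t) - algebraMap That Ahat z
          = - algebraMap That Ahat (z - algebraMap T That t) := by
        rw [map_sub, hTA t]
        ring
      rw [h1, hc, pow_one, map_mul, hφq]
      exact neg_mem (Ideal.mul_mem_right _ _ hqAhat)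
    obtain ⟨tx, htx⟩ := approx x₀
    obtain ⟨ty, hty⟩ := approx y₀
    refine ⟨l, m, algebraMap That Ahat x₀, algebraMap That Ahat y₀, tx, ty,
      hx₀u.map _, hy₀u.map _, htx, hty, ?_⟩
    have hyAhat : algebraMap That Ahat yh =
        algebraMap A Ahat q ^ m * algebraMap That Ahat y₀ := by
      rw [hy₀, map_mul, map_pow, hφq]
    have hxAhat : algebraMap That Ahat xh =
        algebraMap A Ahat q ^ l * algebraMap That Ahat x₀ := by
      rw [hx₀, map_mul, map_pow, hφq]
    apply injF
    rw [← hyAhat, ← hxAhat, map_mul]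
    rw [← hdiv, div_mul_cancel₀ _ hyne]
  -- apply the key lemma to `π_A` to get `e = 1`
  obtain ⟨e, uq, hquq⟩ := IsDiscreteValuationRing.eq_unit_mul_pow_irreducible hq0 hπA
  have he1 : e ≠ 0 := by
    intro h0
    rw [h0, pow_zero, mul_one] at hquq
    exact ((IsLocalRing.mem_maximalIdeal q).mp hqm) (hquq ▸ uq.isUnit)
  have huq : IsUnit (algebraMap A Ahat (↑uq : A)) := uq.isUnit.map _
  have he : e = 1 := by
    obtain ⟨l, m, X, Y, tx, ty, hXu, hYu, hXa, hYa, heq⟩ := key πA hπA.ne_zero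
    have hq' : algebraMap A Ahat q =
        algebraMap A Ahat (↑uq : A) * algebraMap A Ahat πA ^ e := by
      rw [hquq, map_mul, map_pow]
    have hin : algebraMap A Ahat πA ^ (1 + e * m) *
        (algebraMap A Ahat (↑uq : A) ^ m * Y) =
        algebraMap A Ahat πA ^ (e * l) * (algebraMap A Ahat (↑uq : A) ^ l * X) := by
      rw [hq'] at heq
      rw [pow_add, pow_one, pow_mul, pow_mul]
      linear_combination heq
    have hUu : IsUnit (algebraMap A Ahat (↑uq : A) ^ m * Y) := (huq.pow m).mul hYu
    have hVu : IsUnit (algebraMap A Ahat (↑uq : A) ^ l * X) := (huq.pow l).mul hXu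
    have hlm : 1 + e * m = e * l := pow_unit_eq hp0 hpm hUu hVu hin
    have hml : m < l := by
      rcases Nat.lt_or_ge m l with h | h
      · exact h
      · have := Nat.mul_le_mul_left e h
        omega
    have hd : e * (l - m) = 1 := by
      have h2 : e * l = e * m + e * (l - m) := by
        rw [← Nat.mul_add]
        congr 1
        omega
      omega
    exact Nat.eq_one_of_mul_eq_one_right hd
  have hq1 : algebraMap A Ahat q =
      algebraMap A Ahat (↑uq : A) * algebraMap A Ahat πA := by
    rw [hquq, he, pow_one, map_mul]
  constructor
  · -- first goal: `m_T` generates `m_A`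
    have hmaxA : maximalIdeal A = Ideal.span {πA} :=
      (IsDiscreteValuationRing.irreducible_iff_uniformizer πA).mp hπA
    apply le_antisymm
    · rw [Ideal.map_le_iff_le_comap]
      intro t ht
      exact Ideal.mem_comap.mpr (hTm t ht)
    · rw [hmaxA, Ideal.span_le, Set.singleton_subset_iff]
      have hqmem : q ∈ Ideal.map (algebraMap T A) (maximalIdeal T) :=
        Ideal.mem_map_of_mem _ ((IsLocalRing.mem_maximalIdeal πT).mpr hπT.not_isUnit)
      have hπq : πA = (↑uq⁻¹ : A) * q := by
        rw [hquq, he, pow_one, ← mul_assoc, Units.inv_mul, one_mul]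
      rw [hπq]
      exact Ideal.mul_mem_left _ _ hqmem
  · -- second goal: trivial residue extension
    intro a
    by_cases haM : a ∈ maximalIdeal A
    · exact ⟨0, by rw [map_zero, sub_zero]; exact haM⟩
    · have ha0 : a ≠ 0 := fun h0 => haM (h0 ▸ Submodule.zero_mem _)
      have hauA : IsUnit a := by
        by_contra hc
        exact haM ((IsLocalRing.mem_maximalIdeal a).mpr hc)
      have hau : IsUnit (algebraMap A Ahat a) := hauA.map _
      obtain ⟨l', m', X, Y, tx, ty, hXu, hYu, hXa, hYa, heq⟩ := key a ha0
      have hin2 : algebraMap A Ahat πA ^ m' *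
          (algebraMap A Ahat a * (algebraMap A Ahat (↑uq : A) ^ m' * Y)) =
          algebraMap A Ahat πA ^ l' * (algebraMap A Ahat (↑uq : A) ^ l' * X) := by
        rw [hq1] at heq
        linear_combination heq
      have hUu : IsUnit (algebraMap A Ahat a *
          (algebraMap A Ahat (↑uq : A) ^ m' * Y)) := hau.mul ((huq.pow m').mul hYu)
      have hVu : IsUnit (algebraMap A Ahat (↑uq : A) ^ l' * X) := (huq.pow l').mul hXu
      have hml : m' = l' := pow_unit_eq hp0 hpm hUu hVu hin2
      rw [← hml] at hin2
      have hc1 : algebraMap A Ahat a * (algebraMap A Ahat (↑uq : A) ^ m' * Y) =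
          algebraMap A Ahat (↑uq : A) ^ m' * X :=
        mul_left_cancel₀ (pow_ne_zero _ hp0) hin2
      have hc2 : algebraMap A Ahat a * Y = X := by
        refine (huq.pow m').mul_left_cancel ?_
        linear_combination hc1
      -- residue computation
      have hdiff : algebraMap A Ahat (a * algebraMap T A ty - algebraMap T A tx) ∈
          maximalIdeal Ahat := by
        rw [map_sub, map_mul]
        have hre : algebraMap A Ahat a * algebraMap A Ahat (algebraMap T A ty) -
            algebraMap A Ahat (algebraMap T A tx) =
            algebraMap A Ahat a * (algebraMap A Ahat (algebraMap T A ty) - Y) -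
            (algebraMap A Ahat (algebraMap T A tx) - X) +
            (algebraMap A Ahat a * Y - X) := by ring
        rw [hre, hc2, sub_self, add_zero]
        exact sub_mem (Ideal.mul_mem_left _ _ hYa) hXa
      have hdA : a * algebraMap T A ty - algebraMap T A tx ∈ maximalIdeal A := by
        have h1 := (hAhat.2.2 (a * algebraMap T A ty - algebraMap T A tx) 1).mp
          (by simpa using hdiff)
        simpa using h1
      have hayu : IsUnit (algebraMap T A ty) := by
        by_contra hc
        have haym : algebraMap T A ty ∈ maximalIdeal A :=
          (IsLocalRing.mem_maximalIdeal _).mpr hc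
        have h1 : algebraMap A Ahat (algebraMap T A ty) ∈ maximalIdeal Ahat := by
          have h2 : algebraMap T A ty ∈ maximalIdeal A ^ 1 := by rwa [pow_one]
          simpa using (hAhat.2.2 _ 1).mpr h2
        have hYm : Y ∈ maximalIdeal Ahat := by
          have hY2 : Y = algebraMap A Ahat (algebraMap T A ty) -
              (algebraMap A Ahat (algebraMap T A ty) - Y) := by ring
          rw [hY2]
          exact sub_mem h1 hYa
        exact ((IsLocalRing.mem_maximalIdeal Y).mp hYm) hYu
      obtain ⟨vy, hvy⟩ := hTunit ty hayu
      obtain ⟨w, hw⟩ := isUnit_iff_exists_inv.mp hayu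
      refine ⟨tx * ↑vy⁻¹, ?_⟩
      have hvty : algebraMap T A (↑vy⁻¹ : T) * algebraMap T A ty = 1 := by
        rw [← map_mul, ← hvy, Units.inv_mul, map_one]
      have hkey : (a - algebraMap T A (tx * ↑vy⁻¹)) * algebraMap T A ty =
          a * algebraMap T A ty - algebraMap T A tx := by
        rw [map_mul]
        linear_combination (-(algebraMap T A tx)) * hvty
      have hfinal : a - algebraMap T A (tx * ↑vy⁻¹) =
          (a * algebraMap T A ty - algebraMap T A tx) * w := by
        calc a - algebraMap T A (tx * ↑vy⁻¹)
            = (a - algebraMap T A (tx * ↑vy⁻¹)) * (algebraMap T A ty * w) := by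
              rw [hw, mul_one]
          _ = ((a - algebraMap T A (tx * ↑vy⁻¹)) * algebraMap T A ty) * w := by ring
          _ = (a * algebraMap T A ty - algebraMap T A tx) * w := by rw [hkey]
      rw [hfinal]
      exact Ideal.mul_mem_right _ _ hdA
end
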